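/- Let K ≥ 2 and M ≥ 0 be real/natural parameters, and let D = {d ∈ ℝ^K : d_i ≥ 0 for all i, and d_i + d_j ≤ M for all i ≠ j} be the claimed degrees-of-freedom region of the K-user interference channel with M antennas at each node. Then D is exactly the set of nonnegative points that are componentwise dominated by some point in the convex hull of the finite set consisting of all coordinate permutations of the point (M, 0, …, 0), the point (M/2, M/2, …, M/2), and the origin. That is, d ∈ D if and only if d ≥ 0 componentwise and there exists y in the convex hull of {σ·(M,0,…,0) : σ a permutation of the K coordinates} ∪ {(M/2,…,M/2), 0} with d_i ≤ y_i for every coordinate i. -/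

import Mathlib

/-- The region D = {d : d_i ≥ 0, d_i + d_j ≤ M for i ≠ j} is exactly the set
of nonnegative points componentwise dominated by some point of the convex hull of the
coordinate permutations of (M,0,…,0), the symmetric point (M/2,…,M/2), and the origin. -/
theorem dof_region_eq_dominated_hull (K : ℕ) (hK : 2 ≤ K) (M : ℝ) (hM : 0 ≤ M)
    (D : Set (Fin K → ℝ))
    (hD : D = {d | (∀ i, 0 ≤ d i) ∧ ∀ i j, i ≠ j → d i + d j ≤ M})
    (V : Set (Fin K → ℝ))
    (hV : V = {x | ∃ σ : Equiv.Perm (Fin K),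
          x = fun i => if σ i = (⟨0, by omega⟩ : Fin K) then M else 0}
        ∪ {fun _ => M / 2, 0}) :
    ∀ d : Fin K → ℝ,
      d ∈ D ↔ ((∀ i, 0 ≤ d i) ∧ ∃ y ∈ convexHull ℝ V, ∀ i, d i ≤ y i) := by
  subst hD hV
  set z : Fin K := ⟨0, by omega⟩ with hz
  intro d
  constructor
  · rintro ⟨hpos, hsum⟩
    refine ⟨hpos, ?_⟩
    -- max coordinate
    obtain ⟨i0, -, hi0⟩ := Finset.exists_max_image Finset.univ d ⟨z, Finset.mem_univ _⟩
    have herase : (Finset.univ.erase i0).Nonempty := by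
      rw [← Finset.card_pos, Finset.card_erase_of_mem (Finset.mem_univ _), Finset.card_univ,
        Fintype.card_fin]
      omega
    obtain ⟨j0, hj0mem, hj0⟩ := Finset.exists_max_image (Finset.univ.erase i0) d herase
    have hij : j0 ≠ i0 := (Finset.mem_erase.mp hj0mem).1
    have hdle : d i0 + d j0 ≤ M := hsum i0 j0 (Ne.symm hij)
    have hd2 : d j0 ≤ d i0 := hi0 j0 (Finset.mem_univ _)
    have hd2pos : 0 ≤ d j0 := hpos j0
    rcases eq_or_lt_of_le hM with hM0 | hMpos
    · -- M = 0, so d = 0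
      refine ⟨0, subset_convexHull ℝ _ (Or.inr (by simp)), fun i => ?_⟩
      obtain ⟨j, hj⟩ : ∃ j, j ≠ i := by
        rcases eq_or_ne i i0 with rfl | h
        · exact ⟨j0, hij⟩
        · exact ⟨i0, Ne.symm h⟩
      have h1 := hsum i j (Ne.symm hj)
      have h2 := hpos j
      simp only [Pi.zero_apply]
      linarith [hM0.symm ▸ h1]
    · -- M > 0
      set v : Fin K → ℝ := fun i => if (Equiv.swap i0 z) i = z then M else 0 with hv
      have hvV : v ∈ ({x | ∃ σ : Equiv.Perm (Fin K),
          x = fun i => if σ i = z then M else 0} ∪ {fun _ => M / 2, 0}) :=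
        Or.inl ⟨Equiv.swap i0 z, rfl⟩
      have hwV : (fun _ => M / 2) ∈ ({x | ∃ σ : Equiv.Perm (Fin K),
          x = fun i => if σ i = z then M else 0} ∪ {fun _ => M / 2, (0 : Fin K → ℝ)}) :=
        Or.inr (by simp)
      have h0V : (0 : Fin K → ℝ) ∈ ({x | ∃ σ : Equiv.Perm (Fin K),
          x = fun i => if σ i = z then M else 0} ∪ {fun _ => M / 2, (0 : Fin K → ℝ)}) :=
        Or.inr (by simp)
      set a : ℝ := (d i0 - d j0) / M with ha
      set b : ℝ := 2 * d j0 / M with hb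
      have ha0 : 0 ≤ a := div_nonneg (by linarith) hMpos.le
      have hb0 : 0 ≤ b := div_nonneg (by linarith) hMpos.le
      have hab : a + b ≤ 1 := by
        rw [ha, hb, ← add_div, div_le_one hMpos]
        linarith
      refine ⟨a • v + b • (fun _ => M / 2), ?_, ?_⟩
      · have hconv := convex_convexHull ℝ ({x | ∃ σ : Equiv.Perm (Fin K),
          x = fun i => if σ i = z then M else 0} ∪ {fun _ => M / 2, (0 : Fin K → ℝ)})
        have := hconv.sum_mem (ι := Fin 3) (t := Finset.univ)
          (w := ![a, b, 1 - a - b]) (z := ![v, (fun _ => M / 2), 0])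
          (by
            intro i _
            fin_cases i
            · exact ha0
            · exact hb0
            · show (0:ℝ) ≤ 1 - a - b
              linarith)
          (by simp [Fin.sum_univ_three])
          (by
            intro i _
            fin_cases i
            · exact subset_convexHull ℝ _ hvV
            · exact subset_convexHull ℝ _ hwV
            · exact subset_convexHull ℝ _ h0V)
        simpa [Fin.sum_univ_three] using this
      · intro i
        by_cases hii : i = i0
        · subst hii
          have : v i = M := by simp [hv]
          simp only [Pi.add_apply, Pi.smul_apply, this, smul_eq_mul]
          rw [ha, hb]
          field_simp
          linarith
        · have : v i = 0 := by
            simp only [hv, ite_eq_right_iff]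
            intro h
            exfalso
            have : i = i0 := by
              by_contra h2
              rcases eq_or_ne i z with rfl | hiz
              · rw [Equiv.swap_apply_right] at h
                exact h2 h.symm
              · rw [Equiv.swap_apply_of_ne_of_ne h2 hiz] at h
                exact hiz h
            exact hii this
          have hle : d i ≤ d j0 := hj0 i (Finset.mem_erase.mpr ⟨hii, Finset.mem_univ _⟩)
          simp only [Pi.add_apply, Pi.smul_apply, this, smul_eq_mul, mul_zero, zero_add]
          rw [hb]
          field_simp
          linarith
  · rintro ⟨hpos, y, hy, hle⟩
    refine ⟨hpos, fun i j hij => ?_⟩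
    have hconv : Convex ℝ {x : Fin K → ℝ | x i + x j ≤ M} :=
      convex_halfSpace_le ⟨fun x y => by simp [add_add_add_comm], fun c x => by
        simp [mul_add]⟩ M
    have hsub : ({x | ∃ σ : Equiv.Perm (Fin K),
        x = fun i => if σ i = z then M else 0} ∪ {fun _ => M / 2, 0}) ⊆
        {x : Fin K → ℝ | x i + x j ≤ M} := by
      rintro x (⟨σ, rfl⟩ | hx)
      · simp only [Set.mem_setOf_eq]
        have : σ i ≠ σ j := fun h => hij (σ.injective h)
        by_cases h1 : σ i = z <;> by_cases h2 : σ j = z <;>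
          first
          | simp [h1, h2, hM] at this ⊢
          | (simp [h1, h2, hM] at this ⊢; linarith)
      · rcases hx with rfl | rfl
        · simp only [Set.mem_setOf_eq]; linarith
        · simpa using hM
    have := convexHull_min hsub hconv hy
    have h2 := hle i
    have h3 := hle j
    simp only [Set.mem_setOf_eq] at this
    linarith
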